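/- Let θ be an inner function on the unit disk 𝔻 and w ∈ 𝔻. Define α_w(z) = (w - z)/(1 - conj(w)z) and g_w(z) = sqrt(1 - |w|²)/(1 - conj(w)z). Then multiplication by g_w∘θ is an isometry of the model space K_θ onto the model space K_{α_w∘θ}, i.e., (g_w∘θ)K_θ = K_{α_w∘θ} and ‖(g_w∘θ)f‖ = ‖f‖ for all f ∈ K_θ. -/

import Mathlib

open MeasureTheory Complex Real ComplexConjugate AddCircle

noncomputable section

instance fact2pi : Fact (0 < 2 * π) := ⟨by positivity⟩

abbrev Tc : Type := AddCircle (2 * π)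

abbrev haarT : Measure Tc := haarAddCircle

abbrev HL2 : Type := Lp ℂ 2 haarT

def IsHardy (f : HL2) : Prop := ∀ n : ℤ, n < 0 → fourierCoeff (⇑f) n = 0

def IsHardyFun (u : Tc → ℂ) : Prop := ∀ n : ℤ, n < 0 → fourierCoeff u n = 0

def IsInnerF (θ : Tc → ℂ) : Prop :=
  AEStronglyMeasurable θ haarT ∧ (∀ᵐ x ∂haarT, ‖θ x‖ = 1) ∧ IsHardyFun θ

def IsHankelOp (u : Tc → ℂ) (H : HL2 → HL2) : Prop :=
  MemLp u 2 haarT ∧ IsHardyFun u ∧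
  (∃ C : ℝ, ∀ f, ‖H f‖ ≤ C * ‖f‖) ∧
  (∀ f g, H (f + g) = H f + H g) ∧
  (∀ (c : ℂ) (f : HL2), H (c • f) = conj c • H f) ∧
  (∀ f, IsHardy (H f)) ∧
  (∀ f g : HL2, IsHardy g →
    Integrable (fun x => u x * conj (f x) * conj (g x)) haarT →
    (inner ℂ g (H f) : ℂ) = ∫ x, u x * conj (f x) * conj (g x) ∂haarT)

def IsShiftAdjOf (H K : HL2 → HL2) : Prop :=
  ∀ f, IsHardy (K f) ∧
    ∀ n : ℤ, 0 ≤ n → fourierCoeff (⇑(K f)) n = fourierCoeff (⇑(H f)) (n + 1)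

def IsSzego (P : HL2 →L[ℂ] HL2) : Prop :=
  (∀ f, IsHardy (P f)) ∧ ∀ f g : HL2, IsHardy g → (inner ℂ g (f - P f) : ℂ) = 0

def MemKz (θ : Tc → ℂ) (f : HL2) : Prop :=
  IsHardy f ∧ ∀ h w : HL2, IsHardy h →
    (⇑w =ᵐ[haarT] fun x => fourier 1 x * θ x * h x) → (inner ℂ w f : ℂ) = 0

def MemK (θ : Tc → ℂ) (f : HL2) : Prop :=
  IsHardy f ∧ ∀ h w : HL2, IsHardy h →
    (⇑w =ᵐ[haarT] fun x => θ x * h x) → (inner ℂ w f : ℂ) = 0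


lemma norm_fourier (n : ℤ) (x : Tc) : ‖fourier n x‖ = 1 := by
  simp [fourier_apply, Circle.norm_coe]

lemma fourierCoeff_congr {u v : Tc → ℂ} (h : u =ᵐ[haarT] v) (n : ℤ) :
    fourierCoeff u n = fourierCoeff v n :=
  integral_congr_ae (h.mono fun x hx => by simp only [hx])

lemma memℒp_conj {φ : Tc → ℂ} (h : MemLp φ 2 haarT) : MemLp (fun x => conj (φ x)) 2 haarT :=
  MemLp.of_le h (Complex.continuous_conj.comp_aestronglyMeasurable h.1)
    (Filter.Eventually.of_forall fun x => by simp)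

lemma memℒp_bdd_mul {Θ p : Tc → ℂ} (hΘ : AEStronglyMeasurable Θ haarT) {C : ℝ} (hC : 0 ≤ C)
    (hb : ∀ᵐ x ∂haarT, ‖Θ x‖ ≤ C) (hp : MemLp p 2 haarT) :
    MemLp (fun x => Θ x * p x) 2 haarT := by
  refine MemLp.of_le (hp.const_mul (C : ℂ)) (hΘ.mul hp.1) ?_
  filter_upwards [hb] with x hx
  rw [norm_mul, norm_mul]
  gcongr
  rw [Complex.norm_real, Real.norm_eq_abs, _root_.abs_of_nonneg hC]
  exact hx

/-- Key lemma: bounded Hardy function times L² Hardy function is Hardy. -/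
lemma hardy_mul_fun {u : Tc → ℂ} (hum : AEStronglyMeasurable u haarT) {C : ℝ} (hC : 0 ≤ C)
    (hub : ∀ᵐ x ∂haarT, ‖u x‖ ≤ C) (huH : IsHardyFun u)
    {v : Tc → ℂ} (hv2 : MemLp v 2 haarT) (hvH : IsHardyFun v) :
    IsHardyFun (fun x => u x * v x) := by
  intro n hn
  set f : HL2 := hv2.toLp v with hfdef
  have hfH : IsHardy f := fun m hm => (fourierCoeff_congr hv2.coeFn_toLp m).trans (hvH m hm)
  set φ : Tc → ℂ := fun x => fourier (-n) x * u x with hφdef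
  have hφm : AEStronglyMeasurable φ haarT :=
    ((fourier (-n)).continuous.aestronglyMeasurable).mul hum
  have hφ2 : MemLp φ 2 haarT := by
    refine MemLp.of_bound hφm C ?_
    filter_upwards [hub] with x hx
    rw [hφdef]; simp only
    rw [norm_mul, norm_fourier, one_mul]; exact hx
  have hcφ2 : MemLp (fun x => conj (φ x)) 2 haarT := memℒp_conj hφ2
  set Φ : HL2 := hcφ2.toLp _ with hΦdef
  have key : ∀ g : HL2, (inner ℂ Φ g : ℂ) = ∫ x, φ x * g x ∂haarT := by
    intro g
    rw [MeasureTheory.L2.inner_def]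
    refine integral_congr_ae ?_
    filter_upwards [hcφ2.coeFn_toLp] with x hx
    rw [RCLike.inner_apply, hx, Complex.conj_conj]
    ring
  -- inner Φ at each basis vector with nonneg index vanishes
  have hbasis : ∀ i : ℤ, 0 ≤ i → (inner ℂ Φ (fourierLp 2 i) : ℂ) = 0 := by
    intro i hi
    rw [key]
    have : ∫ x, φ x * (fourierLp 2 i : Lp ℂ 2 haarT) x ∂haarT
        = ∫ x, fourier (-(n - i)) x • u x ∂haarT := by
      refine integral_congr_ae ?_
      filter_upwards [coeFn_fourierLp 2 i] with x hx
      rw [hx, hφdef]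
      simp only [smul_eq_mul]
      rw [show -(n - i) = -n + i by ring, fourier_add]
      ring
    rw [this]
    exact huH (n - i) (by omega)
  have hsum := hasSum_fourier_series_L2 f
  have hmap : HasSum (fun i => (innerSL ℂ Φ) (fourierCoeff (⇑f) i • fourierLp 2 i))
      ((innerSL ℂ Φ) f) := hsum.mapL (innerSL ℂ Φ)
  have hzero : ∀ i : ℤ, (innerSL ℂ Φ) (fourierCoeff (⇑f) i • fourierLp 2 i) = 0 := by
    intro i
    rcases lt_or_ge i 0 with hi | hi
    · rw [hfH i hi]; simp
    · rw [ContinuousLinearMap.map_smul]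
      simp only [innerSL_apply_apply, smul_eq_mul]
      rw [hbasis i hi, mul_zero]
  have hΦf : (inner ℂ Φ f : ℂ) = 0 := by
    have h0 : HasSum (fun i : ℤ => (0 : ℂ)) ((innerSL ℂ Φ) f) := by
      simpa only [hzero] using hmap
    simpa using h0.unique hasSum_zero
  calc fourierCoeff (fun x => u x * v x) n
      = ∫ x, φ x * f x ∂haarT := by
        refine integral_congr_ae ?_
        filter_upwards [hv2.coeFn_toLp] with x hx
        simp only [hφdef, smul_eq_mul, hx]
        rw [hfdef, hx]
        ring
    _ = 0 := by rw [← key f, hΦf]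

/-- Bounded Hardy function predicate. -/
def BH (u : Tc → ℂ) : Prop :=
  AEStronglyMeasurable u haarT ∧ (∃ C : ℝ, 0 ≤ C ∧ ∀ᵐ x ∂haarT, ‖u x‖ ≤ C) ∧ IsHardyFun u

lemma BH.memℒp {u : Tc → ℂ} (hu : BH u) : MemLp u 2 haarT := by
  obtain ⟨hm, ⟨C, _, hC⟩, _⟩ := hu
  exact MemLp.of_bound hm C hC

lemma BH.integrable {u : Tc → ℂ} (hu : BH u) : Integrable u haarT :=
  hu.memℒp.integrable one_le_two

lemma BH.mul {u v : Tc → ℂ} (hu : BH u) (hv : BH v) : BH (fun x => u x * v x) := by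
  obtain ⟨hum, ⟨C, hC0, hC⟩, huH⟩ := hu
  obtain ⟨hvm, ⟨D, hD0, hD⟩, hvH⟩ := hv
  refine ⟨hum.mul hvm, ⟨C * D, mul_nonneg hC0 hD0, ?_⟩, ?_⟩
  · filter_upwards [hC, hD] with x h1 h2
    rw [norm_mul]
    exact mul_le_mul h1 h2 (norm_nonneg _) hC0
  · exact hardy_mul_fun hum hC0 hC huH (MemLp.of_bound hvm D hD) hvH

lemma BH.const (c : ℂ) : BH (fun _ => c) := by
  refine ⟨aestronglyMeasurable_const, ⟨‖c‖, norm_nonneg _, Filter.Eventually.of_forall fun _ => le_rfl⟩, ?_⟩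
  intro n hn
  -- fourierCoeff of constant at n ≠ 0 vanishes
  have h1 : fourierCoeff (fun _ : Tc => c) n = c * fourierCoeff (fun _ : Tc => (1:ℂ)) n := by
    rw [← fourierCoeff.const_mul]; simp
  have h2 : fourierCoeff (fun _ : Tc => (1:ℂ)) n = fourierCoeff (⇑(fourierLp (T := 2 * π) 2 0)) n := by
    refine (fourierCoeff_congr ?_ n).symm
    filter_upwards [coeFn_fourierLp (T := 2 * π) 2 0] with x hx
    rw [hx, fourier_zero]
  have h3 : fourierCoeff (⇑(fourierLp (T := 2 * π) 2 0)) n = 0 := by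
    rw [← fourierBasis_repr, ← coe_fourierBasis, fourierBasis.repr_self]
    rw [lp.single_apply]
    exact Pi.single_eq_of_ne (by omega) _
  rw [h1, h2, h3, mul_zero]

lemma integrable_fourier_smul {u : Tc → ℂ} (hu : Integrable u haarT) (n : ℤ) :
    Integrable (fun x => fourier (-n) x • u x) haarT := by
  refine Integrable.bdd_mul (c := 1) hu ((fourier (-n)).continuous.aestronglyMeasurable) (Filter.Eventually.of_forall fun x => ?_)
  rw [norm_fourier]

lemma fourierCoeff_sub {u v : Tc → ℂ} (hu : Integrable u haarT) (hv : Integrable v haarT)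
    (n : ℤ) : fourierCoeff (fun x => u x - v x) n = fourierCoeff u n - fourierCoeff v n := by
  unfold fourierCoeff
  rw [← integral_sub (integrable_fourier_smul hu n) (integrable_fourier_smul hv n)]
  refine integral_congr_ae (Filter.Eventually.of_forall fun x => ?_)
  simp [smul_eq_mul]
  ring

lemma fourierCoeff_add {u v : Tc → ℂ} (hu : Integrable u haarT) (hv : Integrable v haarT)
    (n : ℤ) : fourierCoeff (fun x => u x + v x) n = fourierCoeff u n + fourierCoeff v n := by
  unfold fourierCoeff
  rw [← integral_add (integrable_fourier_smul hu n) (integrable_fourier_smul hv n)]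
  refine integral_congr_ae (Filter.Eventually.of_forall fun x => ?_)
  simp [smul_eq_mul]
  ring

lemma BH.sub {u v : Tc → ℂ} (hu : BH u) (hv : BH v) : BH (fun x => u x - v x) := by
  obtain ⟨hum, ⟨C, hC0, hC⟩, huH⟩ := hu
  obtain ⟨hvm, ⟨D, hD0, hD⟩, hvH⟩ := hv
  refine ⟨hum.sub hvm, ⟨C + D, by positivity, ?_⟩, ?_⟩
  · filter_upwards [hC, hD] with x h1 h2
    exact (norm_sub_le _ _).trans (add_le_add h1 h2)
  · intro n hn
    rw [fourierCoeff_sub ((MemLp.of_bound hum C hC).integrable one_le_two)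
      ((MemLp.of_bound hvm D hD).integrable one_le_two) n, huH n hn, hvH n hn, sub_zero]

lemma BH.add {u v : Tc → ℂ} (hu : BH u) (hv : BH v) : BH (fun x => u x + v x) := by
  obtain ⟨hum, ⟨C, hC0, hC⟩, huH⟩ := hu
  obtain ⟨hvm, ⟨D, hD0, hD⟩, hvH⟩ := hv
  refine ⟨hum.add hvm, ⟨C + D, by positivity, ?_⟩, ?_⟩
  · filter_upwards [hC, hD] with x h1 h2
    exact (norm_add_le _ _).trans (add_le_add h1 h2)
  · intro n hn
    rw [fourierCoeff_add ((MemLp.of_bound hum C hC).integrable one_le_two)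
      ((MemLp.of_bound hvm D hD).integrable one_le_two) n, huH n hn, hvH n hn, add_zero]

lemma BH.pow {ψ : Tc → ℂ} (h : BH ψ) (j : ℕ) : BH (fun x => ψ x ^ j) := by
  induction j with
  | zero => simpa using BH.const 1
  | succ j ih => simpa [pow_succ] using ih.mul h

lemma BH.sum {ψ : Tc → ℂ} (h : BH ψ) (N : ℕ) :
    BH (fun x => ∑ j ∈ Finset.range N, ψ x ^ j) := by
  induction N with
  | zero => simpa using BH.const 0
  | succ N ih => simpa [Finset.sum_range_succ] using ih.add (h.pow N)

lemma norm_fourierCoeff_le {v : Tc → ℂ} {C : ℝ} (hv : ∀ᵐ x ∂haarT, ‖v x‖ ≤ C) (n : ℤ) :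
    ‖fourierCoeff v n‖ ≤ C := by
  have : ‖fourierCoeff v n‖ ≤ C * (haarT Set.univ).toReal := by
    refine norm_integral_le_of_norm_le_const ?_
    filter_upwards [hv] with x hx
    rw [norm_smul, norm_fourier, one_mul]
    exact hx
  simpa using this

lemma BH.one_sub_inv {ψ : Tc → ℂ} (hψ : BH ψ) {r : ℝ} (hr0 : 0 ≤ r) (hr : r < 1)
    (hb : ∀ᵐ x ∂haarT, ‖ψ x‖ ≤ r) : BH (fun x => (1 - ψ x)⁻¹) := by
  have hinvm : AEStronglyMeasurable (fun x => (1 - ψ x)⁻¹) haarT :=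
    ((aemeasurable_const.sub hψ.1.aemeasurable).inv).aestronglyMeasurable
  have hbound : ∀ᵐ x ∂haarT, ‖(1 - ψ x)⁻¹‖ ≤ (1 - r)⁻¹ := by
    filter_upwards [hb] with x hx
    rw [norm_inv]
    have h1 : 1 - r ≤ ‖1 - ψ x‖ := by
      have h2 := norm_sub_norm_le (1 : ℂ) (ψ x)
      rw [norm_one] at h2
      linarith
    exact inv_anti₀ (by linarith) h1
  refine ⟨hinvm, ⟨(1 - r)⁻¹, inv_nonneg.mpr (by linarith), hbound⟩, ?_⟩
  intro n hn
  have hinvInt : Integrable (fun x => (1 - ψ x)⁻¹) haarT :=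
    (MemLp.of_bound hinvm _ hbound).integrable one_le_two
  have key : ∀ N : ℕ, ‖fourierCoeff (fun x => (1 - ψ x)⁻¹) n‖ ≤ r ^ N * (1 - r)⁻¹ := by
    intro N
    have hSN := hψ.sum N
    have hSNint : Integrable (fun x => ∑ j ∈ Finset.range N, ψ x ^ j) haarT := hSN.integrable
    have hdiff : fourierCoeff (fun x => (1 - ψ x)⁻¹ - ∑ j ∈ Finset.range N, ψ x ^ j) n
        = fourierCoeff (fun x => (1 - ψ x)⁻¹) n := by
      rw [fourierCoeff_sub hinvInt hSNint n, hSN.2.2 n hn, sub_zero]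
    rw [← hdiff]
    refine norm_fourierCoeff_le ?_ n
    filter_upwards [hb] with x hx
    have hne' : ψ x ≠ 1 := by
      intro h; rw [h] at hx; simp at hx; linarith
    have hne : (1 : ℂ) - ψ x ≠ 0 := by
      intro h
      apply hne'
      have := sub_eq_zero.mp h
      exact this.symm
    have hident : (1 - ψ x)⁻¹ - ∑ j ∈ Finset.range N, ψ x ^ j
        = ψ x ^ N * (1 - ψ x)⁻¹ := by
      rw [geom_sum_eq hne']
      have hne2 : ψ x - 1 ≠ 0 := by
        intro h; apply hne; rw [← neg_sub]; rw [h]; simp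
      field_simp
      ring
    rw [hident, norm_mul, norm_pow, norm_inv]
    have h1 : 1 - r ≤ ‖1 - ψ x‖ := by
      have h2 := norm_sub_norm_le (1 : ℂ) (ψ x)
      rw [norm_one] at h2
      linarith
    refine mul_le_mul (pow_le_pow_left₀ (norm_nonneg _) hx N) ?_ (by positivity) (by positivity)
    exact inv_anti₀ (by linarith) h1
  have hlim : Filter.Tendsto (fun N : ℕ => r ^ N * (1 - r)⁻¹) Filter.atTop (nhds 0) := by
    simpa using (tendsto_pow_atTop_nhds_zero_of_lt_one hr0 hr).mul_const (1 - r)⁻¹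
  have hle : ‖fourierCoeff (fun x => (1 - ψ x)⁻¹) n‖ ≤ 0 :=
    ge_of_tendsto hlim (Filter.Eventually.of_forall key)
  exact norm_le_zero_iff.mp hle

lemma memK_perp {Θ : Tc → ℂ} {f : HL2} (hf : MemK Θ f) {p : Tc → ℂ}
    (hp : MemLp p 2 haarT) (hpH : IsHardyFun p)
    (hq : MemLp (fun x => Θ x * p x) 2 haarT) :
    ∫ x, conj (Θ x * p x) * (f : Tc → ℂ) x ∂haarT = 0 := by
  set h' : HL2 := hp.toLp p with hh'
  set w' : HL2 := hq.toLp _ with hw'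
  have h1 : IsHardy h' := fun m hm => (fourierCoeff_congr hp.coeFn_toLp m).trans (hpH m hm)
  have h2 : ⇑w' =ᵐ[haarT] fun x => Θ x * h' x := by
    filter_upwards [hq.coeFn_toLp, hp.coeFn_toLp] with x hx hy
    rw [hx, hy]
  have h3 := hf.2 h' w' h1 h2
  rw [MeasureTheory.L2.inner_def] at h3
  rw [← h3]
  refine integral_congr_ae ?_
  filter_upwards [hq.coeFn_toLp] with x hx
  rw [RCLike.inner_apply, hx]
  ring

section Pointwise
variable {w z : ℂ}

lemma mul_conj_one (hz : ‖z‖ = 1) : z * conj z = 1 := by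
  rw [Complex.mul_conj, Complex.normSq_eq_norm_sq, hz]
  norm_num

lemma B_ne_zero (hw : ‖w‖ < 1) (hz : ‖z‖ = 1) : (1 : ℂ) - conj w * z ≠ 0 := by
  intro h
  rw [sub_eq_zero] at h
  have h1 : ‖conj w * z‖ < 1 := by rw [norm_mul, RCLike.norm_conj, hz, mul_one]; exact hw
  rw [← h] at h1
  simp at h1

lemma I1 (hz : ‖z‖ = 1) : w - z = -z * conj (1 - conj w * z) := by
  have h := mul_conj_one hz
  simp only [map_sub, map_one, map_mul, Complex.conj_conj]
  linear_combination (-w) * h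

lemma norm_A (hw : ‖w‖ < 1) (hz : ‖z‖ = 1) : ‖(w - z) / (1 - conj w * z)‖ = 1 := by
  rw [I1 hz, norm_div, norm_mul, norm_neg, hz, one_mul, RCLike.norm_conj]
  exact div_self (norm_ne_zero_iff.mpr (B_ne_zero hw hz))

lemma I3 (hz : ‖z‖ = 1) : conj z * (1 - conj w * z) = -conj (w - z) := by
  have h := mul_conj_one hz
  simp only [map_sub, map_one, map_mul, Complex.conj_conj]
  linear_combination (-(conj w)) * h

lemma I2 (hw : ‖w‖ < 1) (hz : ‖z‖ = 1) :
    conj (((Real.sqrt (1 - ‖w‖ ^ 2) : ℝ) : ℂ) / (1 - conj w * z)) *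
      (((Real.sqrt (1 - ‖w‖ ^ 2) : ℝ) : ℂ) / (1 - conj w * z))
    = 1 + (z * (conj w * (1 - conj w * z)⁻¹)) + conj (z * (conj w * (1 - conj w * z)⁻¹)) := by
  have h := mul_conj_one hz
  have hB : (1 : ℂ) - conj w * z ≠ 0 := B_ne_zero hw hz
  have hB' : conj ((1 : ℂ) - conj w * z) ≠ 0 := by
    simpa using (starRingEnd ℂ).injective.ne_iff.mpr hB
  have hc : ((Real.sqrt (1 - ‖w‖ ^ 2) : ℝ) : ℂ) * ((Real.sqrt (1 - ‖w‖ ^ 2) : ℝ) : ℂ)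
      = 1 - w * conj w := by
    rw [← Complex.ofReal_mul, Real.mul_self_sqrt (by nlinarith [norm_nonneg w, hw])]
    rw [Complex.mul_conj, Complex.normSq_eq_norm_sq]
    push_cast
    ring
  have hBc : (1:ℂ) - w * conj z ≠ 0 := by simpa [map_sub, map_mul] using hB'
  simp only [map_div₀, Complex.conj_ofReal, map_sub, map_one, map_mul, Complex.conj_conj, map_inv₀]
  rw [div_mul_div_comm, hc]
  field_simp
  linear_combination (w * conj w) * h

lemma I4 (hw : ‖w‖ < 1) (hz : ‖z‖ = 1) :
    conj ((w - z) / (1 - conj w * z)) * (((Real.sqrt (1 - ‖w‖ ^ 2) : ℝ) : ℂ) / (1 - conj w * z))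
      = -conj (z * (((Real.sqrt (1 - ‖w‖ ^ 2) : ℝ) : ℂ) / (1 - conj w * z))) := by
  have hB : (1 : ℂ) - conj w * z ≠ 0 := B_ne_zero hw hz
  have hBc : (1 : ℂ) - w * conj z ≠ 0 := by
    intro hcon
    apply hB
    have := congrArg (starRingEnd ℂ) hcon
    simpa [map_sub, map_mul] using this
  rw [I1 hz]
  simp only [map_div₀, map_mul, map_neg, Complex.conj_conj, Complex.conj_ofReal, map_sub, map_one]
  field_simp

end Pointwise

/-- Crofoot transform: for `θ` inner and `w` in the disk, multiplication by
`g_w∘θ`, where `g_w(z) = √(1-|w|²)/(1 - conj(w)z)`, is an isometry of `K_θ` onto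
`K_{α_w∘θ}`, where `α_w(z) = (w-z)/(1 - conj(w)z)`. -/
theorem crofoot_transform
    (θ : Tc → ℂ) (hθ : IsInnerF θ) (w : ℂ) (hw : ‖w‖ < 1) :
    (∀ f F : HL2, MemK θ f →
      (⇑F =ᵐ[haarT] fun x => ((Real.sqrt (1 - ‖w‖ ^ 2) : ℂ) / (1 - conj w * θ x)) * f x) →
      ‖F‖ = ‖f‖ ∧ MemK (fun x => (w - θ x) / (1 - conj w * θ x)) F) ∧
    (∀ G : HL2, MemK (fun x => (w - θ x) / (1 - conj w * θ x)) G →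
      ∃ f : HL2, MemK θ f ∧
        ⇑G =ᵐ[haarT] fun x => ((Real.sqrt (1 - ‖w‖ ^ 2) : ℂ) / (1 - conj w * θ x)) * f x) := by
  obtain ⟨hθm, hθ1, hθH⟩ := hθ
  have hw2 : (0:ℝ) < 1 - ‖w‖ ^ 2 := by nlinarith [norm_nonneg w]
  set cR : ℝ := Real.sqrt (1 - ‖w‖ ^ 2) with hcR
  have hcpos : 0 < cR := Real.sqrt_pos.mpr hw2
  have hcne : (cR : ℂ) ≠ 0 := Complex.ofReal_ne_zero.mpr hcpos.ne'
  -- bounded Hardy functions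
  have hBHθ : BH θ := ⟨hθm, ⟨1, zero_le_one, hθ1.mono fun x hx => le_of_eq hx⟩, hθH⟩
  have hθb1 : ∀ᵐ x ∂haarT, ‖θ x‖ ≤ 1 := hθ1.mono fun x hx => le_of_eq hx
  have hBHψ : BH (fun x => conj w * θ x) := (BH.const (conj w)).mul hBHθ
  have hψb : ∀ᵐ x ∂haarT, ‖conj w * θ x‖ ≤ ‖w‖ := by
    filter_upwards [hθ1] with x hx
    rw [norm_mul, RCLike.norm_conj, hx, mul_one]
  have hBHbinv : BH (fun x => (1 - conj w * θ x)⁻¹) :=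
    hBHψ.one_sub_inv (norm_nonneg w) hw hψb
  have hBHb : BH (fun x => 1 - conj w * θ x) := (BH.const 1).sub hBHψ
  have hBHg : BH (fun x => (cR : ℂ) / (1 - conj w * θ x)) := by
    have := (BH.const (cR : ℂ)).mul hBHbinv
    simpa [div_eq_mul_inv] using this
  have hBHA : BH (fun x => (w - θ x) / (1 - conj w * θ x)) := by
    have := ((BH.const w).sub hBHθ).mul hBHbinv
    simpa [div_eq_mul_inv] using this
  have hardyMul : ∀ (u : Tc → ℂ), BH u → ∀ (f : HL2), IsHardy f →
      IsHardyFun (fun x => u x * (f : Tc → ℂ) x) := by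
    intro u hu f hf
    obtain ⟨hum, ⟨C, hC0, hC⟩, huH⟩ := hu
    exact hardy_mul_fun hum hC0 hC huH (Lp.memLp f) hf
  have bhMulMem : ∀ (u : Tc → ℂ), BH u → ∀ (f : HL2),
      MemLp (fun x => u x * (f : Tc → ℂ) x) 2 haarT := by
    intro u hu f
    obtain ⟨hum, ⟨C, hC0, hC⟩, _⟩ := hu
    exact memℒp_bdd_mul hum hC0 hC (Lp.memLp f)
  constructor
  · -- forward direction
    intro f F hf hF
    have hFhardy : IsHardy F := by
      intro n hn
      rw [fourierCoeff_congr hF n]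
      exact hardyMul _ hBHg f hf.1 n hn
    have hnorm : ‖F‖ = ‖f‖ := by
      have hBHu0 : BH (fun x => conj w * (1 - conj w * θ x)⁻¹) :=
        (BH.const (conj w)).mul hBHbinv
      obtain ⟨hu0m, ⟨C0, hC00, hC0⟩, hu0H⟩ := hBHu0
      have hp2 : MemLp (fun x => (conj w * (1 - conj w * θ x)⁻¹) * (f : Tc → ℂ) x) 2 haarT :=
        memℒp_bdd_mul hu0m hC00 hC0 (Lp.memLp f)
      have hpH : IsHardyFun (fun x => (conj w * (1 - conj w * θ x)⁻¹) * (f : Tc → ℂ) x) :=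
        hardyMul _ ⟨hu0m, ⟨C0, hC00, hC0⟩, hu0H⟩ f hf.1
      have hq2 : MemLp (fun x => θ x * ((conj w * (1 - conj w * θ x)⁻¹) * (f : Tc → ℂ) x)) 2
          haarT := memℒp_bdd_mul hθm zero_le_one hθb1 hp2
      have T1 : ∫ x, conj (θ x * ((conj w * (1 - conj w * θ x)⁻¹) * (f : Tc → ℂ) x)) *
          (f : Tc → ℂ) x ∂haarT = 0 := memK_perp hf hp2 hpH hq2
      have hffInt : Integrable (fun x => conj ((f : Tc → ℂ) x) * (f : Tc → ℂ) x) haarT := by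
        have := MeasureTheory.L2.integrable_inner (𝕜 := ℂ) f f
        simpa [RCLike.inner_apply, Complex.conj_mul'] using this
      have huInt1 : Integrable
          (fun x => (θ x * (conj w * (1 - conj w * θ x)⁻¹)) *
            (conj ((f : Tc → ℂ) x) * (f : Tc → ℂ) x)) haarT := by
        refine hffInt.bdd_mul (c := C0) (hθm.mul hu0m) ?_
        filter_upwards [hθ1, hC0] with x h1 h2
        rw [norm_mul, h1, one_mul]
        exact h2
      have huInt2 : Integrable
          (fun x => conj (θ x * (conj w * (1 - conj w * θ x)⁻¹)) *
            (conj ((f : Tc → ℂ) x) * (f : Tc → ℂ) x)) haarT := by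
        refine hffInt.bdd_mul (c := C0)
          (Complex.continuous_conj.comp_aestronglyMeasurable (hθm.mul hu0m)) ?_
        filter_upwards [hθ1, hC0] with x h1 h2
        rw [RCLike.norm_conj, norm_mul, h1, one_mul]
        exact h2
      have T2 : ∫ x, conj (θ x * (conj w * (1 - conj w * θ x)⁻¹)) *
          (conj ((f : Tc → ℂ) x) * (f : Tc → ℂ) x) ∂haarT = 0 := by
        rw [← T1]
        refine integral_congr_ae (Filter.Eventually.of_forall fun x => ?_)
        simp only [map_mul]
        ring
      have T3 : ∫ x, (θ x * (conj w * (1 - conj w * θ x)⁻¹)) *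
          (conj ((f : Tc → ℂ) x) * (f : Tc → ℂ) x) ∂haarT = 0 := by
        have h0 : ∫ x, conj (conj (θ x * (conj w * (1 - conj w * θ x)⁻¹)) *
            (conj ((f : Tc → ℂ) x) * (f : Tc → ℂ) x)) ∂haarT = 0 := by
          rw [integral_conj, T2, map_zero]
        rw [← h0]
        refine integral_congr_ae (Filter.Eventually.of_forall fun x => ?_)
        simp only [map_mul, Complex.conj_conj]
        ring
      have hinner : (inner ℂ F F : ℂ) = (inner ℂ f f : ℂ) := by
        rw [MeasureTheory.L2.inner_def, MeasureTheory.L2.inner_def]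
        have hleft : ∫ x, (inner ℂ ((F : Tc → ℂ) x) ((F : Tc → ℂ) x) : ℂ) ∂haarT =
            ∫ x, (conj ((f : Tc → ℂ) x) * (f : Tc → ℂ) x
              + (θ x * (conj w * (1 - conj w * θ x)⁻¹)) *
                  (conj ((f : Tc → ℂ) x) * (f : Tc → ℂ) x)
              + conj (θ x * (conj w * (1 - conj w * θ x)⁻¹)) *
                  (conj ((f : Tc → ℂ) x) * (f : Tc → ℂ) x)) ∂haarT := by
          refine integral_congr_ae ?_
          filter_upwards [hF, hθ1] with x hx h1
          rw [RCLike.inner_apply, hx]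
          have hkey := I2 (w := w) (z := θ x) hw h1
          rw [← hcR] at hkey
          simp only [map_mul] at hkey ⊢
          linear_combination (conj ((f : Tc → ℂ) x) * (f : Tc → ℂ) x) * hkey
        have hAB : Integrable (fun x => conj ((f : Tc → ℂ) x) * (f : Tc → ℂ) x
            + (θ x * (conj w * (1 - conj w * θ x)⁻¹)) *
                (conj ((f : Tc → ℂ) x) * (f : Tc → ℂ) x)) haarT := hffInt.add huInt1
        rw [hleft, integral_add hAB huInt2, integral_add hffInt huInt1, T3, T2, add_zero,
          add_zero]
        refine integral_congr_ae (Filter.Eventually.of_forall fun x => ?_)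
        simp [RCLike.inner_apply, Complex.conj_mul']
      rw [norm_eq_sqrt_re_inner (𝕜 := ℂ) F, norm_eq_sqrt_re_inner (𝕜 := ℂ) f, hinner]
    refine ⟨hnorm, hFhardy, ?_⟩
    · intro h v hh hv
      have hp2 : MemLp (fun x => ((cR : ℂ) / (1 - conj w * θ x)) * (h : Tc → ℂ) x) 2 haarT :=
        bhMulMem _ hBHg h
      have hpH : IsHardyFun (fun x => ((cR : ℂ) / (1 - conj w * θ x)) * (h : Tc → ℂ) x) :=
        hardyMul _ hBHg h hh
      have hq2 : MemLp (fun x => θ x * (((cR : ℂ) / (1 - conj w * θ x)) * (h : Tc → ℂ) x)) 2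
          haarT := memℒp_bdd_mul hθm zero_le_one hθb1 hp2
      have T := memK_perp hf hp2 hpH hq2
      rw [MeasureTheory.L2.inner_def]
      have heq : (fun x => (inner ℂ ((v : Tc → ℂ) x) ((F : Tc → ℂ) x) : ℂ)) =ᵐ[haarT]
          fun x => -(conj (θ x * (((cR : ℂ) / (1 - conj w * θ x)) * (h : Tc → ℂ) x)) *
            (f : Tc → ℂ) x) := by
        filter_upwards [hv, hF, hθ1] with x h1 h2 h3
        simp only [RCLike.inner_apply, h1, h2]
        have hkey := I4 (w := w) (z := θ x) hw h3
        rw [← hcR] at hkey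
        simp only [map_mul] at hkey ⊢
        linear_combination (conj ((h : Tc → ℂ) x) * (f : Tc → ℂ) x) * hkey
      rw [integral_congr_ae heq, integral_neg, T, neg_zero]
  · -- converse direction
    intro G hG
    have hBHq : BH (fun x => (1 - conj w * θ x) * ((cR : ℂ))⁻¹) :=
      hBHb.mul (BH.const ((cR : ℂ))⁻¹)
    have hp2 : MemLp (fun x => ((1 - conj w * θ x) * ((cR : ℂ))⁻¹) * (G : Tc → ℂ) x) 2 haarT :=
      bhMulMem _ hBHq G
    refine ⟨hp2.toLp _, ⟨?_, ?_⟩, ?_⟩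
    · -- Hardy
      intro n hn
      rw [fourierCoeff_congr hp2.coeFn_toLp n]
      exact hardyMul _ hBHq G hG.1 n hn
    · -- orthogonal to θ H²
      intro h v hh hv
      obtain ⟨hAm, ⟨CA, hCA0, hCA⟩, hAH⟩ := hBHA
      have hbp2 : MemLp (fun x => (1 - conj w * θ x) * (h : Tc → ℂ) x) 2 haarT :=
        bhMulMem _ hBHb h
      have hbpH : IsHardyFun (fun x => (1 - conj w * θ x) * (h : Tc → ℂ) x) :=
        hardyMul _ hBHb h hh
      have hq2 : MemLp (fun x => ((w - θ x) / (1 - conj w * θ x)) *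
          ((1 - conj w * θ x) * (h : Tc → ℂ) x)) 2 haarT :=
        memℒp_bdd_mul hAm hCA0 hCA hbp2
      have T := memK_perp hG hbp2 hbpH hq2
      rw [MeasureTheory.L2.inner_def]
      have heq : (fun x => (inner ℂ ((v : Tc → ℂ) x) (((hp2.toLp _ : HL2) : Tc → ℂ) x) : ℂ))
          =ᵐ[haarT]
          fun x => (-((cR : ℂ))⁻¹) * (conj (((w - θ x) / (1 - conj w * θ x)) *
            ((1 - conj w * θ x) * (h : Tc → ℂ) x)) * (G : Tc → ℂ) x) := by
        filter_upwards [hv, hp2.coeFn_toLp, hθ1] with x h1 h2 h3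
        simp only [RCLike.inner_apply, h1, h2]
        have hB := B_ne_zero (w := w) (z := θ x) hw h3
        have e1 := I3 (w := w) (z := θ x) h3
        have e2 : w - θ x = ((w - θ x) / (1 - conj w * θ x)) * (1 - conj w * θ x) :=
          (div_mul_cancel₀ _ hB).symm
        have e2' := congrArg (starRingEnd ℂ) e2
        simp only [map_sub, map_one, map_mul, Complex.conj_conj] at e1 e2' ⊢
        linear_combination ((((cR : ℂ))⁻¹ * conj ((h : Tc → ℂ) x) * (G : Tc → ℂ) x) * e1
          - (((cR : ℂ))⁻¹ * conj ((h : Tc → ℂ) x) * (G : Tc → ℂ) x) * e2')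
      rw [integral_congr_ae heq, integral_const_mul, T, mul_zero]
    · -- G = g * f a.e.
      filter_upwards [hp2.coeFn_toLp, hθ1] with x hx h1
      rw [hx]
      have hB := B_ne_zero (w := w) (z := θ x) hw h1
      field_simp

end
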